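/- Every unital based ring of rank 3 is isomorphic as a based ring either to K(k,l,m,n) for some nonnegative integers k, l, m, n satisfying k² + l² = kn + lm + 1, or to the group ring ℤ[ℤ/3ℤ] with basis given by the group elements. -/

import Mathlib

/-- A unital based ring of finite rank, presented by its structure constants:
a ring free of finite rank over ℤ with distinguished basis `{b_i}_{i ∈ I}` containing
the unit, nonnegative structure constants `c i j k` (so `b_i · b_j = Σ_k c i j k • b_k`),
and an involution `i ↦ i*` of `I` inducing an anti-automorphism of the ring and such
that the coefficient of `1` in `b_i · b_j` is `1` if `j = i*` and `0` otherwise. -/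
structure BasedRingData (I : Type*) [Fintype I] [DecidableEq I] where
  /-- structure constants: `b_i · b_j = Σ_k (c i j k) • b_k` -/
  c : I → I → I → ℤ
  /-- the index of the unit element among the basis -/
  one : I
  /-- the involution `i ↦ i*` -/
  star : I → I
  nonneg : ∀ i j k, 0 ≤ c i j k
  one_mul : ∀ i k, c one i k = if k = i then 1 else 0
  mul_one : ∀ i k, c i one k = if k = i then 1 else 0
  assoc : ∀ i j k t, ∑ s, c i j s * c s k t = ∑ s, c j k s * c i s t
  star_involutive : Function.Involutive star
  /-- the involution induces an anti-automorphism `b_i ↦ b_{i*}` -/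
  star_anti : ∀ i j k, c i j k = c (star j) (star i) (star k)
  /-- the coefficient of `1` in `b_i · b_j` is `1` if `j = i*` and `0` otherwise -/
  coeff_one : ∀ i j, c i j one = if j = star i then 1 else 0

/-- The structure constants of the based ring `K(k,l,m,n)` with basis `1, X, Y`
(indexed by `0, 1, 2`) and multiplication `X² = 1 + mX + kY`, `Y² = 1 + lX + nY`,
`XY = YX = kX + lY`: `Kc k l m n i j` is the vector of coefficients of `b_i · b_j`. -/
def Kc (k l m n : ℤ) : Fin 3 → Fin 3 → Fin 3 → ℤ :=
  ![![![1, 0, 0], ![0, 1, 0], ![0, 0, 1]],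
    ![![0, 1, 0], ![1, m, k], ![0, k, l]],
    ![![0, 0, 1], ![0, k, l], ![1, l, n]]]

/-- The structure constants of the group ring `ℤ[ℤ/3ℤ]` with basis the group elements. -/
def Zc : ZMod 3 → ZMod 3 → ZMod 3 → ℤ :=
  fun i j t => if i + j = t then 1 else 0

/-- every unital based ring of rank 3 is isomorphic as a based ring either
to `K(k,l,m,n)` for some nonnegative integers `k, l, m, n` with `k² + l² = kn + lm + 1`,
or to the group ring `ℤ[ℤ/3ℤ]` with basis the group elements.  An isomorphism of based
rings is here recorded as a bijection of the index sets matching the units and the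
structure constants. -/
theorem stmt_1 (I : Type*) [Fintype I] [DecidableEq I] (K : BasedRingData I)
    (hrank : Fintype.card I = 3) :
    (∃ k l m n : ℤ, 0 ≤ k ∧ 0 ≤ l ∧ 0 ≤ m ∧ 0 ≤ n ∧
      k ^ 2 + l ^ 2 = k * n + l * m + 1 ∧
      ∃ e : I ≃ Fin 3, e K.one = 0 ∧
        ∀ i j t, K.c i j t = Kc k l m n (e i) (e j) (e t)) ∨
    (∃ e : I ≃ ZMod 3, e K.one = 0 ∧
        ∀ i j t, K.c i j t = Zc (e i) (e j) (e t)) := by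
  classical
  obtain ⟨e, heo⟩ : ∃ e : I ≃ Fin 3, e K.one = 0 := by
    let f := Fintype.equivFinOfCardEq hrank
    exact ⟨f.trans (Equiv.swap (f K.one) 0), by simp [Equiv.swap_apply_left]⟩
  obtain ⟨o, ho⟩ : ∃ o, K.one = o := ⟨_, rfl⟩
  rw [ho] at heo
  set x := e.symm 1 with hx
  set y := e.symm 2 with hy
  have hex : e x = 1 := e.apply_symm_apply 1
  have hey : e y = 2 := e.apply_symm_apply 2
  have hso0 : e.symm 0 = o := by rw [← heo, Equiv.symm_apply_apply]
  have hox : o ≠ x := fun h => by rw [h, hex] at heo; exact absurd heo (by decide)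
  have hoy : o ≠ y := fun h => by rw [h, hey] at heo; exact absurd heo (by decide)
  have hxy : x ≠ y := fun h => by rw [h, hey] at hex; exact absurd hex (by decide)
  have hxo := hox.symm
  have hyo := hoy.symm
  have hyx := hxy.symm
  have tri : ∀ i : I, i = o ∨ i = x ∨ i = y := by
    intro i
    rcases (show ∀ v : Fin 3, v = 0 ∨ v = 1 ∨ v = 2 by decide) (e i) with h | h | h
    · exact Or.inl (by rw [← e.symm_apply_apply i, h, hso0])
    · exact Or.inr (Or.inl (by rw [← e.symm_apply_apply i, h]))
    · exact Or.inr (Or.inr (by rw [← e.symm_apply_apply i, h]))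
  have hsum : ∀ f : I → ℤ, (∑ s, f s) = f o + f x + f y := by
    intro f
    rw [← Equiv.sum_comp e.symm f, Fin.sum_univ_three, hso0]
  have co1 : ∀ i t, K.c o i t = if t = i then (1:ℤ) else 0 := by
    simp only [← ho]; exact K.one_mul
  have co2 : ∀ i t, K.c i o t = if t = i then (1:ℤ) else 0 := by
    simp only [← ho]; exact K.mul_one
  have cc1 : ∀ i j, K.c i j o = if j = K.star i then (1:ℤ) else 0 := by
    simp only [← ho]; exact K.coeff_one
  have hso : K.star o = o := by
    have h1 : (if o = K.star o then (1:ℤ) else 0) = 1 := by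
      rw [← cc1, co1, if_pos rfl]
    split_ifs at h1 with h
    · exact h.symm
    · exact absurd h1 (by norm_num)
  have hsno : ∀ i, i ≠ o → K.star i ≠ o := by
    intro i hio h
    have := congrArg K.star h
    rw [K.star_involutive, hso] at this
    exact hio this
  rcases tri (K.star x) with hsx | hsx | hsx
  · exact absurd hsx (hsno x hxo)
  · -- star is identity: commutative case, K(k,l,m,n)
    have hsy : K.star y = y := by
      rcases tri (K.star y) with h | h | h
      · exact absurd h (hsno y hyo)
      · exfalso
        have := congrArg K.star h
        rw [K.star_involutive, hsx] at this
        exact hyx this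
      · exact h
    have st : ∀ i, K.star i = i := by
      intro i; rcases tri i with rfl | rfl | rfl <;> assumption
    have comm : ∀ i j t, K.c i j t = K.c j i t := by
      intro i j t; rw [K.star_anti i j t, st, st, st]
    have cxxo : K.c x x o = 1 := by rw [cc1, hsx, if_pos rfl]
    have cxyo : K.c x y o = 0 := by rw [cc1, hsx, if_neg hyx]
    have cyxo : K.c y x o = 0 := by rw [cc1, hsy, if_neg hxy]
    have cyyo : K.c y y o = 1 := by rw [cc1, hsy, if_pos rfl]
    have cyxx : K.c y x x = K.c x y x := comm y x x
    have cyxy : K.c y x y = K.c x y y := comm y x y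
    have A1 := K.assoc x x y o
    rw [hsum, hsum] at A1
    simp only [co1, co2, cxxo, cxyo, cyxo, cyyo, cyxx, cyxy,
      if_neg hox, if_neg hoy, if_neg hxo, if_neg hyo, if_neg hxy, if_neg hyx,
      if_pos rfl, mul_one, mul_zero, zero_mul, one_mul, add_zero, zero_add] at A1
    have A2 := K.assoc y y x o
    rw [hsum, hsum] at A2
    simp only [co1, co2, cxxo, cxyo, cyxo, cyyo, cyxx, cyxy,
      if_neg hox, if_neg hoy, if_neg hxo, if_neg hyo, if_neg hxy, if_neg hyx,
      if_pos rfl, mul_one, mul_zero, zero_mul, one_mul, add_zero, zero_add] at A2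
    have A3 := K.assoc y y x x
    rw [hsum, hsum] at A3
    simp only [co1, co2, cxxo, cxyo, cyxo, cyyo, cyxx, cyxy,
      if_neg hox, if_neg hoy, if_neg hxo, if_neg hyo, if_neg hxy, if_neg hyx,
      if_pos rfl, if_true, mul_one, mul_zero, zero_mul, one_mul, add_zero, zero_add] at A3
    rw [A2] at A3
    refine Or.inl ⟨K.c x x y, K.c y y x, K.c x x x, K.c y y y, K.nonneg _ _ _, K.nonneg _ _ _,
      K.nonneg _ _ _, K.nonneg _ _ _, ?_, e, by rw [ho]; exact heo, ?_⟩
    · rw [A1, A2]; linear_combination -A3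
    · intro i j t
      rcases tri i with rfl | rfl | rfl <;> rcases tri j with rfl | rfl | rfl <;>
        rcases tri t with rfl | rfl | rfl <;>
        simp [Kc, co1, co2, cxxo, cxyo, cyxo, cyyo, cyxx, cyxy, A1, A2, heo, hex, hey,
          hox, hoy, hxy, hxo, hyo, hyx, Matrix.vecHead, Matrix.vecTail]
  · -- star swaps x and y: ZMod 3 case
    have hsy : K.star y = x := by
      have := congrArg K.star hsx
      rw [K.star_involutive] at this
      exact this.symm
    have cxxo : K.c x x o = 0 := by rw [cc1, hsx, if_neg hxy]
    have cxyo : K.c x y o = 1 := by rw [cc1, hsx, if_pos rfl]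
    have cyxo : K.c y x o = 1 := by rw [cc1, hsy, if_pos rfl]
    have cyyo : K.c y y o = 0 := by rw [cc1, hsy, if_neg hyx]
    have s1 : K.c x y y = K.c x y x := by
      have := K.star_anti x y x; rw [hsx, hsy] at this; exact this.symm
    have s2 : K.c y x y = K.c y x x := by
      have := K.star_anti y x x; rw [hsx, hsy] at this; exact this.symm
    have s3 : K.c y y x = K.c x x y := by
      have := K.star_anti y y x; rwa [hsx, hsy] at this
    have s4 : K.c y y y = K.c x x x := by
      have := K.star_anti y y y; rwa [hsy] at this
    have B1 := K.assoc x x y o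
    rw [hsum, hsum] at B1
    simp only [co1, co2, cxxo, cxyo, cyxo, cyyo, s1, s2, s3, s4,
      if_neg hox, if_neg hoy, if_neg hxo, if_neg hyo, if_neg hxy, if_neg hyx,
      if_pos rfl, if_true, mul_one, mul_zero, zero_mul, one_mul, add_zero, zero_add] at B1
    have B2 := K.assoc x y x o
    rw [hsum, hsum] at B2
    simp only [co1, co2, cxxo, cxyo, cyxo, cyyo, s1, s2, s3, s4,
      if_neg hox, if_neg hoy, if_neg hxo, if_neg hyo, if_neg hxy, if_neg hyx,
      if_pos rfl, if_true, mul_one, mul_zero, zero_mul, one_mul, add_zero, zero_add] at B2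
    have B3 := K.assoc x x y x
    rw [hsum, hsum] at B3
    simp only [co1, co2, cxxo, cxyo, cyxo, cyyo, s1, s2, s3, s4,
      if_neg hox, if_neg hoy, if_neg hxo, if_neg hyo, if_neg hxy, if_neg hyx,
      if_pos rfl, if_true, mul_one, mul_zero, zero_mul, one_mul, add_zero, zero_add] at B3
    have h1 : (K.c x x y - K.c x y x) * (K.c x x y + K.c x y x) = 1 := by
      linear_combination B3
    have hnb := K.nonneg x x y
    have hnp := K.nonneg x y x
    obtain ⟨h2, h3⟩ : K.c x x y - K.c x y x = 1 ∧ K.c x x y + K.c x y x = 1 := by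
      rcases Int.eq_one_or_neg_one_of_mul_eq_one' h1 with h | ⟨h2, h3⟩
      · exact h
      · exfalso; omega
    have hp : K.c x y x = 0 := by omega
    have hb : K.c x x y = 1 := by omega
    have ha : K.c x x x = 0 := B1.trans hp
    have hq : K.c y x x = 0 := by rw [← B2]; exact hp
    refine Or.inr ⟨e.trans (ZMod.finEquiv 3).toEquiv, ?_, ?_⟩
    · rw [ho]; simp only [Equiv.trans_apply, Equiv.refl_apply, heo]; rfl
    · intro i j t
      rcases tri i with rfl | rfl | rfl <;> rcases tri j with rfl | rfl | rfl <;>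
        rcases tri t with rfl | rfl | rfl <;>
        simp [Zc, Equiv.trans_apply, Equiv.refl_apply, heo, hex, hey, co1, co2,
          cxxo, cxyo, cyxo, cyyo, ha, hb, hp, hq, s1, s2, s3, s4,
          hox, hoy, hxy, hxo, hyo, hyx] <;> decide
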